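/- Let m ≥ 1, C₄ > 0, M > 0, C₁ > 0, and a > 0 be real numbers, and set p := 1/(2C₄). Let k be a real number with k² ≥ 1/(C₁ M), and let A be a real number with 0 < A ≤ 1/e and a k² ≤ p log(1/A). Set T := p log(1/A) and C₅ := max{ C₁² (4m/e)^{2m}, p^{−2m} } · M² · (1 + p/a)^{2m}. Then (1/k⁴) exp(C₄ T) A + M² T^{−2m} ≤ 2 C₅ ( k² + log(1/A) )^{−2m}. -/

import Mathlib

lemma aux_xr (x r : ℝ) (hx : 0 < x) (hr : 0 < r) :
    x ^ r ≤ (r / Real.exp 1) ^ r * Real.exp x := by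
  rw [Real.rpow_def_of_pos hx, Real.rpow_def_of_pos (by positivity), ← Real.exp_add]
  apply Real.exp_le_exp.mpr
  have hlog : Real.log (x / r) ≤ x / r - 1 := Real.log_le_sub_one_of_pos (by positivity)
  rw [Real.log_div hx.ne' hr.ne'] at hlog
  rw [Real.log_div hr.ne' (Real.exp_ne_zero 1), Real.log_exp]
  have hxr : x / r * r = x := div_mul_cancel₀ x hr.ne'
  nlinarith [mul_le_mul_of_nonneg_right hlog hr.le]

/-- The estimate `Φ(T) ≤ 2C₅ (k² + log(1/A))^{−2m}` in the logarithmic regime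
`a k² ≤ p log(1/A)`, with `T = p log(1/A)`, `p = 1/(2C₄)` and
`C₅ = max{C₁² (4m/e)^{2m}, p^{−2m}} M² (1 + p/a)^{2m}`. -/
theorem phi_estimate_log_regime (m C₄ M C₁ a : ℝ)
    (hm : 1 ≤ m) (hC₄ : 0 < C₄) (hM : 0 < M) (hC₁ : 0 < C₁) (ha : 0 < a)
    (p : ℝ) (hp : p = 1 / (2 * C₄))
    (k : ℝ) (hk : 1 / (C₁ * M) ≤ k ^ 2)
    (A : ℝ) (hA0 : 0 < A) (hA1 : A ≤ 1 / Real.exp 1)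
    (hak : a * k ^ 2 ≤ p * Real.log (1 / A))
    (T : ℝ) (hT : T = p * Real.log (1 / A))
    (C₅ : ℝ)
    (hC₅ : C₅ = max (C₁ ^ 2 * (4 * m / Real.exp 1) ^ (2 * m)) (p ^ (-(2 * m)))
      * M ^ 2 * (1 + p / a) ^ (2 * m)) :
    (1 / k ^ 4) * Real.exp (C₄ * T) * A + M ^ 2 * T ^ (-(2 * m))
      ≤ 2 * C₅ * (k ^ 2 + Real.log (1 / A)) ^ (-(2 * m)) := by
  set L := Real.log (1 / A) with hLdef
  have hp0 : 0 < p := by rw [hp]; positivity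
  have hm0 : 0 < 2 * m := by linarith
  have hL1 : 1 ≤ L := by
    have h1 : Real.exp 1 ≤ 1 / A := by
      rw [le_div_iff₀ hA0]
      have h2 := mul_le_mul_of_nonneg_right hA1 (Real.exp_pos 1).le
      rw [one_div, inv_mul_cancel₀ (Real.exp_ne_zero 1)] at h2
      nlinarith
    calc (1:ℝ) = Real.log (Real.exp 1) := (Real.log_exp 1).symm
      _ ≤ L := Real.log_le_log (Real.exp_pos 1) h1
  have hL0 : 0 < L := by linarith
  have hk2 : 0 < k ^ 2 := lt_of_lt_of_le (by positivity) hk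
  have hq0 : 0 < 1 + p / a := by positivity
  have hsum : k ^ 2 + L ≤ (1 + p / a) * L := by
    have : k ^ 2 ≤ p / a * L := by
      rw [div_mul_eq_mul_div, le_div_iff₀ ha]
      nlinarith
    nlinarith
  have hkL : 0 < k ^ 2 + L := by positivity
  set X := (k ^ 2 + L) ^ (-(2 * m)) with hXdef
  have hXlow : (1 + p / a) ^ (-(2 * m)) * L ^ (-(2 * m)) ≤ X := by
    rw [← Real.mul_rpow hq0.le hL0.le]
    exact Real.rpow_le_rpow_of_nonpos hkL hsum (by linarith)
  have hqcancel : (1 + p / a) ^ (2 * m) * (1 + p / a) ^ (-(2 * m)) = 1 := by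
    rw [← Real.rpow_add hq0]; simp
  have hLneg : L ^ (-(2 * m)) = (L ^ (2 * m))⁻¹ := Real.rpow_neg hL0.le _
  have hLpow : 0 < L ^ (2 * m) := Real.rpow_pos_of_pos hL0 _
  have hLnegpos : 0 < L ^ (-(2 * m)) := Real.rpow_pos_of_pos hL0 _
  have hexpA : Real.exp (C₄ * T) * A = Real.exp (-(L / 2)) := by
    have hA : A = Real.exp (-L) := by
      rw [hLdef, one_div, Real.log_inv, neg_neg, Real.exp_log hA0]
    have hCT : C₄ * T = L / 2 := by
      rw [hT, hp]; field_simp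
    rw [hCT, hA, ← Real.exp_add]; ring_nf
  have hk4 : 1 / k ^ 4 ≤ C₁ ^ 2 * M ^ 2 := by
    have h2 : (1 / (C₁ * M)) ^ 2 ≤ (k ^ 2) ^ 2 := by
      apply pow_le_pow_left₀ (by positivity) hk
    have h3 : (k ^ 2) ^ 2 = k ^ 4 := by ring
    have h4 : 0 < k ^ 4 := by rw [← h3]; positivity
    rw [div_le_iff₀ h4]
    have h5 : 1 / (C₁ * M) ^ 2 ≤ k ^ 4 := by
      rw [← h3]
      calc 1 / (C₁ * M) ^ 2 = (1 / (C₁ * M)) ^ 2 := by ring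
        _ ≤ (k ^ 2) ^ 2 := h2
    rw [div_le_iff₀ (by positivity)] at h5
    nlinarith [h5]
  have hc0 : 0 < (4 * m / Real.exp 1) ^ (2 * m) := Real.rpow_pos_of_pos (by positivity) _
  have hkey : L ^ (2 * m) ≤ (4 * m / Real.exp 1) ^ (2 * m) * Real.exp (L / 2) := by
    have h1 := aux_xr (L / 2) (2 * m) (by positivity) hm0
    have h2 : L ^ (2 * m) = 2 ^ (2 * m) * (L / 2) ^ (2 * m) := by
      rw [← Real.mul_rpow (by norm_num) (by positivity)]
      congr 1; ring
    have h3 : (2:ℝ) ^ (2 * m) * (2 * m / Real.exp 1) ^ (2 * m)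
        = (4 * m / Real.exp 1) ^ (2 * m) := by
      rw [← Real.mul_rpow (by norm_num) (by positivity)]
      congr 1; ring
    calc L ^ (2 * m) = 2 ^ (2 * m) * (L / 2) ^ (2 * m) := h2
      _ ≤ 2 ^ (2 * m) * ((2 * m / Real.exp 1) ^ (2 * m) * Real.exp (L / 2)) := by
          apply mul_le_mul_of_nonneg_left h1 (by positivity)
      _ = (4 * m / Real.exp 1) ^ (2 * m) * Real.exp (L / 2) := by rw [← mul_assoc, h3]
  have hexpL : Real.exp (-(L / 2)) ≤ (4 * m / Real.exp 1) ^ (2 * m) * L ^ (-(2 * m)) := by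
    have h6 : (Real.exp (L / 2))⁻¹ * L ^ (2 * m) ≤ (4 * m / Real.exp 1) ^ (2 * m) := by
      rw [inv_mul_le_iff₀ (Real.exp_pos _)]
      linarith [hkey]
    calc Real.exp (-(L / 2)) = (Real.exp (L / 2))⁻¹ := by rw [Real.exp_neg]
      _ ≤ (4 * m / Real.exp 1) ^ (2 * m) / L ^ (2 * m) := (le_div_iff₀ hLpow).mpr h6
      _ = (4 * m / Real.exp 1) ^ (2 * m) * L ^ (-(2 * m)) := by
          rw [hLneg, div_eq_mul_inv]
  -- second term bound
  have hT2 : T ^ (-(2 * m)) = p ^ (-(2 * m)) * L ^ (-(2 * m)) := by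
    rw [hT, Real.mul_rpow hp0.le hL0.le]
  have hterm2 : M ^ 2 * T ^ (-(2 * m)) ≤ C₅ * X := by
    calc M ^ 2 * T ^ (-(2 * m))
        = p ^ (-(2 * m)) * M ^ 2 * (1 + p / a) ^ (2 * m)
          * ((1 + p / a) ^ (-(2 * m)) * L ^ (-(2 * m))) := by
          rw [hT2]
          linear_combination (-(M ^ 2 * p ^ (-(2 * m)) * L ^ (-(2 * m)))) * hqcancel
      _ ≤ C₅ * X := by
          apply mul_le_mul _ hXlow (by positivity) (by rw [hC₅]; positivity)
          rw [hC₅]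
          gcongr
          exact le_max_right _ _
  -- first term bound
  have hterm1 : 1 / k ^ 4 * Real.exp (C₄ * T) * A ≤ C₅ * X := by
    rw [mul_assoc, hexpA]
    calc 1 / k ^ 4 * Real.exp (-(L / 2))
        ≤ C₁ ^ 2 * M ^ 2 * ((4 * m / Real.exp 1) ^ (2 * m) * L ^ (-(2 * m))) :=
          mul_le_mul hk4 hexpL (Real.exp_pos _).le (by positivity)
      _ = C₁ ^ 2 * (4 * m / Real.exp 1) ^ (2 * m) * M ^ 2 * (1 + p / a) ^ (2 * m)
          * ((1 + p / a) ^ (-(2 * m)) * L ^ (-(2 * m))) := by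
          linear_combination (-(C₁ ^ 2 * M ^ 2 * (4 * m / Real.exp 1) ^ (2 * m)
            * L ^ (-(2 * m)))) * hqcancel
      _ ≤ C₅ * X := by
          apply mul_le_mul _ hXlow (by positivity) (by rw [hC₅]; positivity)
          rw [hC₅]
          gcongr
          exact le_max_left _ _
  linarith
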